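/- arXiv:1705.08203 — 2 statements merged into one kernel-verified Lean document; each statement's English description precedes it below -/
import Mathlib

section
/- (Theorem 1 (ii), (c)⇔(d).) Let n ≥ 2, 2 ≤ p ≤ ∞, Ω ⊆ ℝⁿ open and u ∈ C²(Ω). Then the following are equivalent: (c) for every isometry T : ℝⁿ → ℝⁿ (T(x) = Qᵀ(x−x₀) with Q orthogonal and x₀ ∈ ℝⁿ), the function u + u∘T satisfies Δ_p[u + u∘T] ≤ 0 at every point of Ω ∩ T⁻¹(Ω); (d) D_p u ≤ 0 at every point of Ω. -/
open scoped ENNReal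
open Filter Matrix

noncomputable section

/-- Hessian matrix of `u` at `x` (entries are second partial derivatives). -/
def hess {n : ℕ} (u : EuclideanSpace ℝ (Fin n) → ℝ) (x : EuclideanSpace ℝ (Fin n)) :
    Matrix (Fin n) (Fin n) ℝ :=
  Matrix.of fun i j =>
    iteratedFDeriv ℝ 2 u x ![EuclideanSpace.single i 1, EuclideanSpace.single j 1]

/-- Laplacian: trace of the Hessian. -/
def lapl {n : ℕ} (u : EuclideanSpace ℝ (Fin n) → ℝ) (x : EuclideanSpace ℝ (Fin n)) : ℝ :=
  ∑ i, hess u x i i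

/-- Quadratic form `zᵀ A z`. -/
def quadForm {n : ℕ} (A : Matrix (Fin n) (Fin n) ℝ) (z : EuclideanSpace ℝ (Fin n)) : ℝ :=
  ∑ i, ∑ j, z i * A i j * z j

/-- Largest eigenvalue of a (symmetric) matrix: the max of `zᵀAz` over unit vectors `z`. -/
def lamMax {n : ℕ} (A : Matrix (Fin n) (Fin n) ℝ) : ℝ :=
  sSup {r : ℝ | ∃ z : EuclideanSpace ℝ (Fin n), ‖z‖ = 1 ∧ r = quadForm A z}

open Classical in
/-- Dominative p-Laplacian `D_p u(x)`, for `2 ≤ p ≤ ∞`. -/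
def Dop {n : ℕ} (p : ℝ≥0∞) (u : EuclideanSpace ℝ (Fin n) → ℝ)
    (x : EuclideanSpace ℝ (Fin n)) : ℝ :=
  if p = ⊤ then lamMax (hess u x)
  else (p.toReal - 2) * lamMax (hess u x) + lapl u x

open Classical in
/-- p-Laplacian `Δ_p u(x)` (the `∞`-Laplacian `∇u H u ∇uᵀ` for `p = ∞`).
For finite `p`, `Δ_p u = |∇u|^{p-2} Δu + (p-2)|∇u|^{p-4} ∇u Hu ∇uᵀ` with real powers,
which is automatically `0` at critical points when `p > 2` and `Δu` when `p = 2`. -/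
def DeltaOp {n : ℕ} (p : ℝ≥0∞) (u : EuclideanSpace ℝ (Fin n) → ℝ)
    (x : EuclideanSpace ℝ (Fin n)) : ℝ :=
  if p = ⊤ then quadForm (hess u x) (gradient u x)
  else ‖gradient u x‖ ^ (p.toReal - 2) * lapl u x
    + (p.toReal - 2) * ‖gradient u x‖ ^ (p.toReal - 4) * quadForm (hess u x) (gradient u x)

open Classical in
/-- Radial profile `W_{k,p}` of the fundamental solution of the p-Laplace equation in ℝᵏ. -/
def Wfun (p : ℝ≥0∞) (k : ℕ) (r : ℝ) : ℝ :=
  if p = ⊤ ∨ k = 1 then -r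
  else if p.toReal = k then -Real.log r
  else -((p.toReal - 1) / (p.toReal - k)) * r ^ ((p.toReal - k) / (p.toReal - 1))

/-- Euclidean norm of a plain vector in `Fin k → ℝ`. -/
def enorm' {k : ℕ} (v : Fin k → ℝ) : ℝ := Real.sqrt (∑ i, v i ^ 2)

/-- `u : Ω → (-∞,∞]` is a viscosity supersolution of `G(∇u, Hu) = 0` on `Ω`:
lower semicontinuous, `> -∞`, finite on a dense subset of `Ω`, and every `C²`
test function `φ` touching `u` from below at `x₀ ∈ Ω` satisfies `G φ x₀ ≤ 0`. -/
def ViscSupersol {n : ℕ}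
    (G : (EuclideanSpace ℝ (Fin n) → ℝ) → EuclideanSpace ℝ (Fin n) → ℝ)
    (Ω : Set (EuclideanSpace ℝ (Fin n))) (u : EuclideanSpace ℝ (Fin n) → EReal) : Prop :=
  LowerSemicontinuousOn u Ω ∧
  (∀ x ∈ Ω, u x ≠ ⊥) ∧
  Ω ⊆ closure {x | x ∈ Ω ∧ u x ≠ ⊤} ∧
  ∀ x₀ ∈ Ω, ∀ φ : EuclideanSpace ℝ (Fin n) → ℝ,
    ContDiffAt ℝ 2 φ x₀ → (φ x₀ : EReal) = u x₀ →
    (∀ᶠ x in nhdsWithin x₀ Ω, (φ x : EReal) ≤ u x) → G φ x₀ ≤ 0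

open Classical in
/-- EReal-valued fundamental solution `w_{m,p}` on ℝᵐ, equal to `⊤` at the pole when `p ≤ m`,
`p ≠ ∞`. -/
def wEReal (p : ℝ≥0∞) (m : ℕ) (x : EuclideanSpace ℝ (Fin m)) : EReal :=
  if x = 0 ∧ p ≤ (m : ℝ≥0∞) ∧ p ≠ ⊤ then (⊤ : EReal)
  else ((Wfun p m ‖x‖ : ℝ) : EReal)

end
section Aux
variable {n : ℕ}

local notation "E" => EuclideanSpace ℝ (Fin n)

/-- plain vector to Euclidean space -/
noncomputable def toE {n : ℕ} (v : Fin n → ℝ) : EuclideanSpace ℝ (Fin n) := (WithLp.equiv 2 _).symm v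

lemma toE_apply (v : Fin n → ℝ) (i : Fin n) : toE v i = v i := rfl

lemma toE_coord (z : E) : toE (fun i => z i) = z := rfl

lemma quadForm_eq_dot (A : Matrix (Fin n) (Fin n) ℝ) (z : E) :
    quadForm A z = (fun i => z i) ⬝ᵥ (A *ᵥ fun i => z i) := by
  unfold quadForm dotProduct Matrix.mulVec dotProduct
  congr 1; funext i
  rw [Finset.mul_sum]
  congr 1; funext j; ring

lemma norm_toE_sq (v : Fin n → ℝ) : ‖toE v‖ ^ 2 = v ⬝ᵥ v := by
  rw [EuclideanSpace.norm_eq]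
  rw [Real.sq_sqrt (by positivity)]
  unfold dotProduct
  congr 1; funext i; rw [toE_apply, Real.norm_eq_abs, sq_abs, sq]

lemma dot_self_coord (z : E) : (fun i => z i) ⬝ᵥ (fun i => z i) = ‖z‖ ^ 2 := by
  rw [← toE_coord z, ← norm_toE_sq]; rfl

end Aux
section Aux2
variable {n : ℕ}
local notation "E" => EuclideanSpace ℝ (Fin n)

def sphSet (A : Matrix (Fin n) (Fin n) ℝ) : Set ℝ :=
  {r : ℝ | ∃ z : EuclideanSpace ℝ (Fin n), ‖z‖ = 1 ∧ r = quadForm A z}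

lemma lamMax_eq_sSup (A : Matrix (Fin n) (Fin n) ℝ) : lamMax A = sSup (sphSet A) := rfl

lemma abs_coord_le {z : E} (i : Fin n) : |z i| ≤ ‖z‖ := by
  rw [EuclideanSpace.norm_eq]
  simp only [Real.norm_eq_abs, sq_abs]
  have h1 : |z i| = Real.sqrt (z i ^ 2) := by rw [Real.sqrt_sq_eq_abs]
  rw [h1]
  apply Real.sqrt_le_sqrt
  exact Finset.single_le_sum (f := fun j => z j ^ 2) (fun j _ => sq_nonneg _) (Finset.mem_univ i)

lemma quadForm_le_sum_abs {A : Matrix (Fin n) (Fin n) ℝ} {z : E} (hz : ‖z‖ = 1) :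
    quadForm A z ≤ ∑ i, ∑ j, |A i j| := by
  unfold quadForm
  apply Finset.sum_le_sum; intro i _
  apply Finset.sum_le_sum; intro j _
  calc z i * A i j * z j ≤ |z i * A i j * z j| := le_abs_self _
    _ = |z i| * |A i j| * |z j| := by rw [abs_mul, abs_mul]
    _ ≤ 1 * |A i j| * 1 := by
        have h1 := abs_coord_le (z := z) i
        have h2 := abs_coord_le (z := z) j
        rw [hz] at h1 h2
        apply mul_le_mul (mul_le_mul h1 le_rfl (abs_nonneg _) (by linarith [abs_nonneg (z i)])) h2 (abs_nonneg _)
        positivity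
    _ = |A i j| := by ring

lemma sphSet_nonempty (hn : 0 < n) (A : Matrix (Fin n) (Fin n) ℝ) : (sphSet A).Nonempty := by
  refine ⟨quadForm A (EuclideanSpace.single ⟨0, hn⟩ 1), ⟨_, ?_, rfl⟩⟩
  rw [EuclideanSpace.norm_single]; norm_num

lemma sphSet_bddAbove (A : Matrix (Fin n) (Fin n) ℝ) : BddAbove (sphSet A) := by
  refine ⟨∑ i, ∑ j, |A i j|, ?_⟩
  rintro r ⟨z, hz, rfl⟩
  exact quadForm_le_sum_abs hz

lemma le_lamMax {A : Matrix (Fin n) (Fin n) ℝ} {z : E} (hz : ‖z‖ = 1) :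
    quadForm A z ≤ lamMax A :=
  le_csSup (sphSet_bddAbove A) ⟨z, hz, rfl⟩

lemma lamMax_le (hn : 0 < n) {A : Matrix (Fin n) (Fin n) ℝ} {r : ℝ}
    (h : ∀ z : E, ‖z‖ = 1 → quadForm A z ≤ r) : lamMax A ≤ r := by
  apply csSup_le (sphSet_nonempty hn A)
  rintro s ⟨z, hz, rfl⟩; exact h z hz

lemma quadForm_add_matrix (A B : Matrix (Fin n) (Fin n) ℝ) (z : E) :
    quadForm (A + B) z = quadForm A z + quadForm B z := by
  unfold quadForm
  rw [← Finset.sum_add_distrib]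
  congr 1; funext i
  rw [← Finset.sum_add_distrib]
  congr 1; funext j
  simp [Matrix.add_apply]; ring

lemma quadForm_smul_vec (A : Matrix (Fin n) (Fin n) ℝ) (c : ℝ) (z : E) :
    quadForm A (c • z) = c ^ 2 * quadForm A z := by
  unfold quadForm
  rw [Finset.mul_sum]
  congr 1; funext i
  rw [Finset.mul_sum]
  congr 1; funext j
  have : (c • z) i = c * z i := rfl
  have h2 : (c • z) j = c * z j := rfl
  rw [this, h2]; ring

lemma quadForm_zero_vec (A : Matrix (Fin n) (Fin n) ℝ) :
    quadForm A (0 : E) = 0 := by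
  unfold quadForm
  apply Finset.sum_eq_zero; intro i _
  apply Finset.sum_eq_zero; intro j _
  have : (0 : E) i = 0 := rfl
  rw [this]; ring

lemma quadForm_le_lamMax_mul (hn : 0 < n) (A : Matrix (Fin n) (Fin n) ℝ) (z : E) :
    quadForm A z ≤ lamMax A * ‖z‖ ^ 2 := by
  rcases eq_or_ne z 0 with rfl | hz
  · rw [quadForm_zero_vec]; simp
  · have hz' : ‖z‖ ≠ 0 := norm_ne_zero_iff.mpr hz
    have hz0 : 0 < ‖z‖ := norm_pos_iff.mpr hz
    have huz : ‖(‖z‖⁻¹ • z : E)‖ = 1 := by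
      rw [norm_smul, norm_inv, norm_norm, inv_mul_cancel₀ hz']
    have := le_lamMax (A := A) huz
    rw [quadForm_smul_vec] at this
    have h2 : quadForm A z = ‖z‖ ^ 2 * ((‖z‖⁻¹) ^ 2 * quadForm A z) := by
      field_simp
    rw [h2]
    calc ‖z‖ ^ 2 * ((‖z‖⁻¹) ^ 2 * quadForm A z) ≤ ‖z‖ ^ 2 * lamMax A := by
          apply mul_le_mul_of_nonneg_left this (by positivity)
      _ = lamMax A * ‖z‖ ^ 2 := by ring

lemma lamMax_add_le (hn : 0 < n) (A B : Matrix (Fin n) (Fin n) ℝ) :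
    lamMax (A + B) ≤ lamMax A + lamMax B := by
  apply lamMax_le hn
  intro z hz
  rw [quadForm_add_matrix]
  exact add_le_add (le_lamMax hz) (le_lamMax hz)

lemma lamMax_le_of_entries_close (hn : 0 < n) (A B : Matrix (Fin n) (Fin n) ℝ) :
    lamMax A ≤ lamMax B + ∑ i, ∑ j, |A i j - B i j| := by
  apply lamMax_le hn
  intro z hz
  have : quadForm A z = quadForm B z + quadForm (A - B) z := by
    rw [← quadForm_add_matrix]; norm_num
  rw [this]
  exact add_le_add (le_lamMax hz) (quadForm_le_sum_abs hz)

lemma lamMax_zero (hn : 0 < n) : lamMax (0 : Matrix (Fin n) (Fin n) ℝ) = 0 := by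
  apply le_antisymm
  · apply lamMax_le hn; intro z hz
    simp [quadForm]
  · rcases sphSet_nonempty hn 0 with ⟨r, z, hz, rfl⟩
    have : quadForm (0 : Matrix (Fin n) (Fin n) ℝ) z = 0 := by simp [quadForm]
    rw [← this]
    exact le_lamMax hz

end Aux2
section Aux3
variable {n : ℕ}
local notation "E" => EuclideanSpace ℝ (Fin n)

lemma orth_mul_comm {Q : Matrix (Fin n) (Fin n) ℝ} (hQ : Qᵀ * Q = 1) : Q * Qᵀ = 1 :=
  mul_eq_one_comm.mp hQ

lemma dot_mulVec_transpose (Q : Matrix (Fin n) (Fin n) ℝ) (v w : Fin n → ℝ) :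
    (Qᵀ *ᵥ v) ⬝ᵥ w = v ⬝ᵥ (Q *ᵥ w) := by
  rw [← Matrix.vecMul_transpose, ← Matrix.dotProduct_mulVec, Matrix.transpose_transpose]

lemma norm_toE_mulVec_transpose {Q : Matrix (Fin n) (Fin n) ℝ} (hQ : Qᵀ * Q = 1)
    (z : E) : ‖toE (Qᵀ *ᵥ fun i => z i)‖ = ‖z‖ := by
  have h : ‖toE (Qᵀ *ᵥ fun i => z i)‖ ^ 2 = ‖z‖ ^ 2 := by
    rw [norm_toE_sq]
    rw [dot_mulVec_transpose, Matrix.mulVec_mulVec, orth_mul_comm hQ, Matrix.one_mulVec]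
    exact dot_self_coord z
  have h1 : (0:ℝ) ≤ ‖toE (Qᵀ *ᵥ fun i => z i)‖ := norm_nonneg _
  have h2 : (0:ℝ) ≤ ‖z‖ := norm_nonneg _
  nlinarith

lemma quadForm_conj (Q M : Matrix (Fin n) (Fin n) ℝ) (z : E) :
    quadForm (Q * M * Qᵀ) z = quadForm M (toE (Qᵀ *ᵥ fun i => z i)) := by
  rw [quadForm_eq_dot, quadForm_eq_dot]
  have hz : (fun i => toE (Qᵀ *ᵥ fun i => z i) i) = Qᵀ *ᵥ (fun i => z i) := rfl
  rw [hz, dot_mulVec_transpose, Matrix.mulVec_mulVec, Matrix.mulVec_mulVec,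
    Matrix.mul_assoc]

lemma lamMax_conj_le (hn : 0 < n) {Q : Matrix (Fin n) (Fin n) ℝ} (hQ : Qᵀ * Q = 1)
    (M : Matrix (Fin n) (Fin n) ℝ) : lamMax (Q * M * Qᵀ) ≤ lamMax M := by
  apply lamMax_le hn
  intro z hz
  rw [quadForm_conj]
  apply le_lamMax
  rw [norm_toE_mulVec_transpose hQ, hz]

lemma trace_conj {Q : Matrix (Fin n) (Fin n) ℝ} (hQ : Qᵀ * Q = 1)
    (M : Matrix (Fin n) (Fin n) ℝ) : ∑ i, (Q * M * Qᵀ) i i = ∑ i, M i i := by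
  have h1 : ∑ i, (Q * M * Qᵀ) i i = Matrix.trace (Q * M * Qᵀ) := rfl
  have h2 : ∑ i, M i i = Matrix.trace M := rfl
  rw [h1, h2, Matrix.trace_mul_cycle, hQ, Matrix.one_mul]

/-- Householder reflection -/
noncomputable def hhQ {n : ℕ} (w : Fin n → ℝ) : Matrix (Fin n) (Fin n) ℝ :=
  1 - (2 / (w ⬝ᵥ w)) • Matrix.vecMulVec w w

lemma hhQ_symm (w : Fin n → ℝ) : (hhQ w)ᵀ = hhQ w := by
  unfold hhQ
  have h : (Matrix.vecMulVec w w)ᵀ = Matrix.vecMulVec w w := by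
    ext i j
    rw [Matrix.transpose_apply, Matrix.vecMulVec_apply, Matrix.vecMulVec_apply]
    ring
  rw [Matrix.transpose_sub, Matrix.transpose_smul, Matrix.transpose_one, h]

lemma hhQ_mulVec (w v : Fin n → ℝ) :
    hhQ w *ᵥ v = v - (2 / (w ⬝ᵥ w) * (w ⬝ᵥ v)) • w := by
  unfold hhQ
  rw [Matrix.sub_mulVec, Matrix.one_mulVec, Matrix.smul_mulVec]
  congr 1
  funext i
  simp only [Pi.smul_apply, Matrix.mulVec, dotProduct, Matrix.vecMulVec_apply,
    smul_eq_mul]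
  rw [Finset.mul_sum, Finset.mul_sum, Finset.sum_mul]
  congr 1; funext j; ring

lemma hhQ_orth {w : Fin n → ℝ} (hw : w ⬝ᵥ w ≠ 0) : (hhQ w)ᵀ * hhQ w = 1 := by
  rw [hhQ_symm]
  ext i j
  have key : (hhQ w * hhQ w) *ᵥ (Pi.single j 1) = (1 : Matrix (Fin n) (Fin n) ℝ) *ᵥ (Pi.single j 1) := by
    rw [← Matrix.mulVec_mulVec, hhQ_mulVec, hhQ_mulVec, Matrix.one_mulVec]
    rw [dotProduct_sub, dotProduct_smul]
    funext k
    simp only [Pi.sub_apply, Pi.smul_apply, smul_eq_mul]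
    field_simp
    ring
  have h1 := congrFun key i
  rwa [Matrix.mulVec_single_one, Matrix.mulVec_single_one] at h1
end Aux3
section Aux4
variable {n : ℕ}
local notation "E" => EuclideanSpace ℝ (Fin n)

/-- coordinate basis vector -/
noncomputable def ee {n : ℕ} (i : Fin n) : EuclideanSpace ℝ (Fin n) := EuclideanSpace.single i 1

lemma hess_eq_fderiv2 (u : E → ℝ) (x : E) (i j : Fin n) :
    hess u x i j = fderiv ℝ (fderiv ℝ u) x (ee i) (ee j) := by
  show iteratedFDeriv ℝ 2 u x ![EuclideanSpace.single i 1, EuclideanSpace.single j 1] = _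
  rw [iteratedFDeriv_two_apply]
  rfl

lemma decomp_vec (z : E) : ∑ k, z k • ee k = z := by
  have h := (EuclideanSpace.basisFun (Fin n) ℝ).sum_repr z
  simpa [EuclideanSpace.basisFun_repr, EuclideanSpace.basisFun_apply, ee] using h

lemma bilin_expand (B : E →L[ℝ] E →L[ℝ] ℝ) (a b : E) :
    B a b = ∑ k, ∑ l, a k * b l * B (ee k) (ee l) := by
  conv_lhs => rw [← decomp_vec a]
  rw [map_sum, ContinuousLinearMap.sum_apply]
  apply Finset.sum_congr rfl; intro k _
  rw [_root_.map_smul, ContinuousLinearMap.smul_apply, smul_eq_mul]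
  conv_lhs => rw [← decomp_vec b]
  rw [map_sum, Finset.mul_sum]
  apply Finset.sum_congr rfl; intro l _
  rw [_root_.map_smul, smul_eq_mul]
  ring

/-- continuous linear map given by a matrix -/
noncomputable def Lmap {n : ℕ} (Q : Matrix (Fin n) (Fin n) ℝ) :
    EuclideanSpace ℝ (Fin n) →L[ℝ] EuclideanSpace ℝ (Fin n) :=
  LinearMap.toContinuousLinearMap (Matrix.toEuclideanLin Q)

lemma Lmap_apply (Q : Matrix (Fin n) (Fin n) ℝ) (y : E) :
    Lmap Q y = toE (Q *ᵥ fun i => y i) := rfl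

/-- the affine map T -/
noncomputable def Tmap {n : ℕ} (Q : Matrix (Fin n) (Fin n) ℝ)
    (x₀ : EuclideanSpace ℝ (Fin n)) (y : EuclideanSpace ℝ (Fin n)) : EuclideanSpace ℝ (Fin n) :=
  Lmap Qᵀ (y - x₀)

lemma Tmap_apply (Q : Matrix (Fin n) (Fin n) ℝ) (x₀ y : E) (i : Fin n) :
    Tmap Q x₀ y i = Qᵀ.mulVec (fun j => y j - x₀ j) i := rfl

lemma Tmap_hasFDerivAt (Q : Matrix (Fin n) (Fin n) ℝ) (x₀ y : E) :
    HasFDerivAt (Tmap Q x₀) (Lmap Qᵀ) y := by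
  have h := ((Lmap (n := n) Qᵀ).hasFDerivAt (x := y - x₀)).comp y
    ((hasFDerivAt_id y).sub_const x₀)
  exact h

lemma Tmap_continuous (Q : Matrix (Fin n) (Fin n) ℝ) (x₀ : E) :
    Continuous (Tmap Q x₀) := by
  have : Continuous (fun y : E => y - x₀) := continuous_id.sub continuous_const
  exact (Lmap Qᵀ).continuous.comp this

lemma Lmap_ee (Q : Matrix (Fin n) (Fin n) ℝ) (i k : Fin n) :
    (Lmap Qᵀ (ee i)) k = Q i k := by
  rw [Lmap_apply]
  show (Qᵀ *ᵥ fun j => (ee (n := n) i) j) k = Q i k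
  have h : (fun j => (ee (n := n) i) j) = Pi.single i 1 := by
    funext j
    show EuclideanSpace.single i (1:ℝ) j = _
    rw [EuclideanSpace.single_apply]
    simp [Pi.single_apply, eq_comm]
  rw [h, Matrix.mulVec_single_one]
  rfl
end Aux4
section Aux5
open Topology
variable {n : ℕ}
local notation "E" => EuclideanSpace ℝ (Fin n)
variable {Ω : Set (EuclideanSpace ℝ (Fin n))} {u : EuclideanSpace ℝ (Fin n) → ℝ}
  {Q : Matrix (Fin n) (Fin n) ℝ} {x₀ x : EuclideanSpace ℝ (Fin n)}

lemma udiffat (hΩ : IsOpen Ω) (hu : ContDiffOn ℝ 2 u Ω) {y : E} (hy : y ∈ Ω) :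
    DifferentiableAt ℝ u y :=
  (hu.differentiableOn (by norm_num)).differentiableAt (hΩ.mem_nhds hy)

lemma uFdiffat (hΩ : IsOpen Ω) (hu : ContDiffOn ℝ 2 u Ω) {y : E} (hy : y ∈ Ω) :
    DifferentiableAt ℝ (fderiv ℝ u) y :=
  (((hu y hy).contDiffAt (hΩ.mem_nhds hy)).fderiv_right
    (m := 1) (by norm_num)).differentiableAt (by norm_num)

/-- precomposition operator -/
noncomputable def Phi {n : ℕ} (Q : Matrix (Fin n) (Fin n) ℝ) :
    (EuclideanSpace ℝ (Fin n) →L[ℝ] ℝ) →L[ℝ] (EuclideanSpace ℝ (Fin n) →L[ℝ] ℝ) :=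
  (ContinuousLinearMap.compL ℝ (EuclideanSpace ℝ (Fin n)) (EuclideanSpace ℝ (Fin n)) ℝ).flip
    (Lmap Qᵀ)

lemma Phi_apply (A : EuclideanSpace ℝ (Fin n) →L[ℝ] ℝ) :
    Phi Q A = A.comp (Lmap Qᵀ) := by
  rw [Phi, ContinuousLinearMap.flip_apply, ContinuousLinearMap.compL_apply]

theorem hess_grad_v (hΩ : IsOpen Ω) (hu : ContDiffOn ℝ 2 u Ω)
    (hx : x ∈ Ω) (hTx : Tmap Q x₀ x ∈ Ω) :
    hess (fun z => u z + u (Tmap Q x₀ z)) x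
      = hess u x + Q * hess u (Tmap Q x₀ x) * Qᵀ ∧
    gradient (fun z => u z + u (Tmap Q x₀ z)) x
      = gradient u x + toE (Q *ᵥ fun i => gradient u (Tmap Q x₀ x) i) := by
  have hTd : ∀ y, HasFDerivAt (Tmap Q x₀) (Lmap Qᵀ) y := Tmap_hasFDerivAt Q x₀
  have hmem : ∀ᶠ y in 𝓝 x, y ∈ Ω ∧ Tmap Q x₀ y ∈ Ω := by
    have h1 : Ω ∈ 𝓝 x := hΩ.mem_nhds hx
    have h2 : (Tmap Q x₀) ⁻¹' Ω ∈ 𝓝 x :=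
      (Tmap_continuous Q x₀).continuousAt.preimage_mem_nhds (hΩ.mem_nhds hTx)
    filter_upwards [h1, h2] with y hy1 hy2
    exact ⟨hy1, hy2⟩
  have hvd : ∀ y, y ∈ Ω → Tmap Q x₀ y ∈ Ω →
      HasFDerivAt (fun z => u z + u (Tmap Q x₀ z))
        (fderiv ℝ u y + Phi Q (fderiv ℝ u (Tmap Q x₀ y))) y := by
    intro y h1 h2
    have d1 : HasFDerivAt u (fderiv ℝ u y) y := (udiffat hΩ hu h1).hasFDerivAt
    have d2 : HasFDerivAt (fun z => u (Tmap Q x₀ z))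
        ((fderiv ℝ u (Tmap Q x₀ y)).comp (Lmap Qᵀ)) y :=
      (udiffat hΩ hu h2).hasFDerivAt.comp y (hTd y)
    rw [Phi_apply]
    exact d1.add d2
  have hev : (fderiv ℝ (fun z => u z + u (Tmap Q x₀ z)))
      =ᶠ[𝓝 x] fun y => fderiv ℝ u y + Phi Q (fderiv ℝ u (Tmap Q x₀ y)) := by
    filter_upwards [hmem] with y hy
    exact (hvd y hy.1 hy.2).fderiv
  have hD2 : HasFDerivAt (fun y => fderiv ℝ u y + Phi Q (fderiv ℝ u (Tmap Q x₀ y)))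
      (fderiv ℝ (fderiv ℝ u) x
        + (Phi Q).comp ((fderiv ℝ (fderiv ℝ u) (Tmap Q x₀ x)).comp (Lmap Qᵀ))) x := by
    have d1 : HasFDerivAt (fderiv ℝ u) (fderiv ℝ (fderiv ℝ u) x) x :=
      (uFdiffat hΩ hu hx).hasFDerivAt
    have d3 : HasFDerivAt (fun y => fderiv ℝ u (Tmap Q x₀ y))
        ((fderiv ℝ (fderiv ℝ u) (Tmap Q x₀ x)).comp (Lmap Qᵀ)) x :=
      (uFdiffat hΩ hu hTx).hasFDerivAt.comp x (hTd x)
    exact d1.add ((Phi Q).hasFDerivAt.comp x d3)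
  have hfd : fderiv ℝ (fderiv ℝ (fun z => u z + u (Tmap Q x₀ z))) x
      = fderiv ℝ (fderiv ℝ u) x
        + (Phi Q).comp ((fderiv ℝ (fderiv ℝ u) (Tmap Q x₀ x)).comp (Lmap Qᵀ)) := by
    rw [hev.fderiv_eq]
    exact hD2.fderiv
  constructor
  · ext i j
    rw [Matrix.add_apply, hess_eq_fderiv2, hfd, ContinuousLinearMap.add_apply,
      ContinuousLinearMap.add_apply]
    congr 1
    · exact (hess_eq_fderiv2 u x i j).symm
    · have h1 : ((Phi Q).comp ((fderiv ℝ (fderiv ℝ u) (Tmap Q x₀ x)).comp (Lmap Qᵀ))) (ee i) (ee j)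
          = (fderiv ℝ (fderiv ℝ u) (Tmap Q x₀ x)) (Lmap Qᵀ (ee i)) (Lmap Qᵀ (ee j)) := by
        rw [ContinuousLinearMap.comp_apply, ContinuousLinearMap.comp_apply, Phi_apply,
          ContinuousLinearMap.comp_apply]
      rw [h1, bilin_expand]
      trans (∑ k, ∑ l, Q i k * Q j l * hess u (Tmap Q x₀ x) k l)
      · apply Finset.sum_congr rfl; intro k _
        apply Finset.sum_congr rfl; intro l _
        rw [Lmap_ee, Lmap_ee, ← hess_eq_fderiv2]
      · rw [Matrix.mul_apply, Finset.sum_comm]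
        apply Finset.sum_congr rfl; intro l _
        rw [Matrix.mul_apply, Finset.sum_mul]
        apply Finset.sum_congr rfl; intro k _
        rw [Matrix.transpose_apply]
        ring
  · have g1 : HasFDerivAt u (InnerProductSpace.toDual ℝ _ (gradient u x)) x :=
      (udiffat hΩ hu hx).hasGradientAt.hasFDerivAt
    have g2 : HasFDerivAt (fun z => u (Tmap Q x₀ z))
        ((InnerProductSpace.toDual ℝ _ (gradient u (Tmap Q x₀ x))).comp (Lmap Qᵀ)) x :=
      (udiffat hΩ hu hTx).hasGradientAt.hasFDerivAt.comp x (hTd x)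
    have g3 : (InnerProductSpace.toDual ℝ _ (gradient u (Tmap Q x₀ x))).comp (Lmap Qᵀ)
        = InnerProductSpace.toDual ℝ _ (toE (Q *ᵥ fun i => gradient u (Tmap Q x₀ x) i)) := by
      apply ContinuousLinearMap.ext; intro y
      rw [ContinuousLinearMap.comp_apply, InnerProductSpace.toDual_apply_apply,
        InnerProductSpace.toDual_apply_apply]
      rw [PiLp.inner_apply, PiLp.inner_apply]
      simp only [RCLike.inner_apply, conj_trivial]
      show (Qᵀ *ᵥ fun i => y i) ⬝ᵥ (fun i => gradient u (Tmap Q x₀ x) i)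
        = (fun i => y i) ⬝ᵥ (Q *ᵥ fun i => gradient u (Tmap Q x₀ x) i)
      exact dot_mulVec_transpose _ _ _
    rw [g3] at g2
    have gsum := g1.add g2
    rw [← map_add] at gsum
    have hgs := gsum.hasGradientAt.gradient
    rw [LinearIsometryEquiv.symm_apply_apply] at hgs
    exact hgs

end Aux5
section Aux6
open Topology
variable {n : ℕ}
local notation "E" => EuclideanSpace ℝ (Fin n)

lemma toReal_two_le {p : ℝ≥0∞} (hp : 2 ≤ p) (hptop : p ≠ ⊤) : 2 ≤ p.toReal := by
  have h2 : ((2:ℝ≥0∞)).toReal = 2 := by norm_num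
  rw [← h2]
  exact ENNReal.toReal_mono hptop hp

lemma Dop_finite {p : ℝ≥0∞} (hptop : p ≠ ⊤) (u : E → ℝ) (x : E) :
    Dop p u x = (p.toReal - 2) * lamMax (hess u x) + lapl u x := by
  rw [Dop, if_neg hptop]

lemma Dop_top (u : E → ℝ) (x : E) : Dop ⊤ u x = lamMax (hess u x) := by
  rw [Dop, if_pos rfl]

lemma DeltaOp_finite {p : ℝ≥0∞} (hptop : p ≠ ⊤) (v : E → ℝ) (x : E) :
    DeltaOp p v x = ‖gradient v x‖ ^ (p.toReal - 2) * lapl v x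
      + (p.toReal - 2) * ‖gradient v x‖ ^ (p.toReal - 4)
        * quadForm (hess v x) (gradient v x) := by
  rw [DeltaOp, if_neg hptop]

lemma DeltaOp_top (v : E → ℝ) (x : E) :
    DeltaOp ⊤ v x = quadForm (hess v x) (gradient v x) := by
  rw [DeltaOp, if_pos rfl]

lemma rpow_sub_four_mul_sq {r : ℝ} (hr : 0 < r) (q : ℝ) :
    r ^ (q - 4) * r ^ 2 = r ^ (q - 2) := by
  have h : (r : ℝ) ^ (2 : ℕ) = r ^ ((2:ℕ) : ℝ) := (Real.rpow_natCast r 2).symm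
  rw [h, ← Real.rpow_add hr]
  congr 1
  push_cast
  ring

theorem dir_dc {p : ℝ≥0∞} (hn : 0 < n) (hp : 2 ≤ p)
    {Ω : Set (EuclideanSpace ℝ (Fin n))} (hΩ : IsOpen Ω)
    {u : EuclideanSpace ℝ (Fin n) → ℝ} (hu : ContDiffOn ℝ 2 u Ω)
    (hd : ∀ x ∈ Ω, Dop p u x ≤ 0)
    (Q : Matrix (Fin n) (Fin n) ℝ) (hQ : Qᵀ * Q = 1)
    (x₀ : EuclideanSpace ℝ (Fin n)) (x : EuclideanSpace ℝ (Fin n))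
    (hx : x ∈ Ω) (hTx : Tmap Q x₀ x ∈ Ω) :
    DeltaOp p (fun z => u z + u (Tmap Q x₀ z)) x ≤ 0 := by
  obtain ⟨hH, -⟩ := hess_grad_v hΩ hu hx hTx
  set v := fun z => u z + u (Tmap Q x₀ z) with hv
  set y := Tmap Q x₀ x with hy
  -- laplacian of v
  have hlapl : lapl v x = lapl u x + lapl u y := by
    unfold lapl
    rw [hH]
    have : ∀ i, (hess u x + Q * hess u y * Qᵀ) i i
        = hess u x i i + (Q * hess u y * Qᵀ) i i := fun i => rfl
    rw [Finset.sum_congr rfl (fun i _ => this i), Finset.sum_add_distrib,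
      trace_conj hQ]
  -- lamMax of v
  have hlam : lamMax (hess v x) ≤ lamMax (hess u x) + lamMax (hess u y) := by
    rw [hH]
    calc lamMax (hess u x + Q * hess u y * Qᵀ)
        ≤ lamMax (hess u x) + lamMax (Q * hess u y * Qᵀ) := lamMax_add_le hn _ _
      _ ≤ lamMax (hess u x) + lamMax (hess u y) :=
          add_le_add le_rfl (lamMax_conj_le hn hQ _)
  by_cases hptop : p = ⊤
  · subst hptop
    rw [DeltaOp_top]
    have h1 : quadForm (hess v x) (gradient v x)
        ≤ lamMax (hess v x) * ‖gradient v x‖ ^ 2 := quadForm_le_lamMax_mul hn _ _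
    have h2 : lamMax (hess v x) ≤ 0 := by
      have d1 := hd x hx; have d2 := hd y hTx
      rw [Dop_top] at d1 d2
      linarith
    have := mul_nonpos_of_nonpos_of_nonneg h2 (by positivity : (0:ℝ) ≤ ‖gradient v x‖ ^ 2)
    linarith
  · have hq := toReal_two_le hp hptop
    have d1 := hd x hx; have d2 := hd y hTx
    rw [Dop_finite hptop] at d1 d2
    rw [DeltaOp_finite hptop]
    rcases eq_or_ne (gradient v x) 0 with hg | hg
    · rw [hg]
      rw [quadForm_zero_vec]
      rw [norm_zero]
      rcases eq_or_lt_of_le hq with hq2 | hq2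
      · rw [← hq2]
        norm_num
        rw [← hq2] at d1 d2
        norm_num at d1 d2
        rw [hlapl]; linarith
      · rw [Real.zero_rpow (by linarith :  p.toReal - 2 ≠ 0)]
        norm_num
    · have hr : 0 < ‖gradient v x‖ := norm_pos_iff.mpr hg
      set r := ‖gradient v x‖ with hrdef
      have hb : quadForm (hess v x) (gradient v x) ≤ lamMax (hess v x) * r ^ 2 :=
        quadForm_le_lamMax_mul hn _ _
      have key : r ^ (p.toReal - 2) * lapl v x + (p.toReal - 2) * r ^ (p.toReal - 4)
            * quadForm (hess v x) (gradient v x)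
          ≤ r ^ (p.toReal - 2) * (lapl v x + (p.toReal - 2) * lamMax (hess v x)) := by
        have h1 : (p.toReal - 2) * r ^ (p.toReal - 4) * quadForm (hess v x) (gradient v x)
            ≤ (p.toReal - 2) * r ^ (p.toReal - 4) * (lamMax (hess v x) * r ^ 2) := by
          apply mul_le_mul_of_nonneg_left hb
          have := Real.rpow_nonneg (le_of_lt hr) (p.toReal - 4)
          nlinarith
        have h2 : (p.toReal - 2) * r ^ (p.toReal - 4) * (lamMax (hess v x) * r ^ 2)
            = r ^ (p.toReal - 2) * ((p.toReal - 2) * lamMax (hess v x)) := by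
          rw [← rpow_sub_four_mul_sq hr p.toReal]; ring
        nlinarith
      have hfin : lapl v x + (p.toReal - 2) * lamMax (hess v x) ≤ 0 := by
        rw [hlapl]
        nlinarith [hlam]
      have := mul_nonpos_of_nonneg_of_nonpos
        (Real.rpow_nonneg (le_of_lt hr) (p.toReal - 2)) hfin
      linarith
end Aux6
section Aux7
open Topology
variable {n : ℕ}
local notation "E" => EuclideanSpace ℝ (Fin n)

def HypC {n : ℕ} (p : ℝ≥0∞) (Ω : Set (EuclideanSpace ℝ (Fin n)))
    (u : EuclideanSpace ℝ (Fin n) → ℝ) : Prop :=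
  ∀ (Q : Matrix (Fin n) (Fin n) ℝ), Qᵀ * Q = 1 →
    ∀ x₀ : EuclideanSpace ℝ (Fin n),
    ∀ T : EuclideanSpace ℝ (Fin n) → EuclideanSpace ℝ (Fin n),
      (∀ x, ∀ i, T x i = Qᵀ.mulVec (fun j => x j - x₀ j) i) →
      ∀ x, x ∈ Ω → T x ∈ Ω → DeltaOp p (fun z => u z + u (T z)) x ≤ 0

theorem test_ineq {p : ℝ≥0∞} {Ω : Set (EuclideanSpace ℝ (Fin n))} (hΩ : IsOpen Ω)
    {u : EuclideanSpace ℝ (Fin n) → ℝ} (hu : ContDiffOn ℝ 2 u Ω)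
    (hc : HypC p Ω u) {x : EuclideanSpace ℝ (Fin n)} (hx : x ∈ Ω)
    {z : EuclideanSpace ℝ (Fin n)} (hz : ‖z‖ = 1)
    (hd0 : ((fun i => z i) ⬝ᵥ fun i => gradient u x i) ≠ 0) :
    (p ≠ ⊤ → lapl u x + (p.toReal - 2) * quadForm (hess u x) z ≤ 0)
    ∧ (p = ⊤ → quadForm (hess u x) z ≤ 0) := by
  set g' : Fin n → ℝ := fun i => gradient u x i with hg'
  set z' : Fin n → ℝ := fun i => z i with hz'
  set d : ℝ := z' ⬝ᵥ g' with hd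
  have hzz : z' ⬝ᵥ z' = 1 := by rw [dot_self_coord, hz]; norm_num
  -- construct the orthogonal matrix
  obtain ⟨Q, hQsym, hQorth, hQg, hQz⟩ :
      ∃ Q : Matrix (Fin n) (Fin n) ℝ, Qᵀ = Q ∧ Qᵀ * Q = 1 ∧
        Q *ᵥ g' = (2*d) • z' - g' ∧ Q *ᵥ z' = z' := by
    by_cases hw : g' - d • z' = 0
    · have hgz : g' = d • z' := by rwa [sub_eq_zero] at hw
      refine ⟨1, by simp, by simp, ?_, by simp⟩
      rw [Matrix.one_mulVec, hgz]
      funext i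
      simp only [Pi.smul_apply, Pi.sub_apply, smul_eq_mul]
      ring
    · set w : Fin n → ℝ := g' - d • z' with hwdef
      have hwz : w ⬝ᵥ z' = 0 := by
        rw [hwdef, sub_dotProduct, smul_dotProduct, hzz,
          dotProduct_comm g' z', ← hd]
        simp
      have hwg : w ⬝ᵥ g' = w ⬝ᵥ w := by
        have e1 : w ⬝ᵥ g' = g' ⬝ᵥ g' - d * d := by
          rw [hwdef, sub_dotProduct, smul_dotProduct, ← hd]
          simp [smul_eq_mul]
        have e2 : w ⬝ᵥ w = g' ⬝ᵥ g' - d * d := by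
          nth_rewrite 2 [hwdef]
          rw [dotProduct_sub, dotProduct_smul, hwz, e1]
          simp
        rw [e1, e2]
      have hs : w ⬝ᵥ w ≠ 0 := by
        intro h
        exact hw ((dotProduct_self_eq_zero).mp h)
      refine ⟨hhQ w, hhQ_symm w, hhQ_orth hs, ?_, ?_⟩
      · rw [hhQ_mulVec, hwg, div_mul_cancel₀ _ hs, hwdef]
        funext i
        simp only [Pi.sub_apply, Pi.smul_apply, smul_eq_mul]
        ring
      · rw [hhQ_mulVec, hwz]
        simp
  -- the isometry fixing x
  set x₀ : EuclideanSpace ℝ (Fin n) := x - toE (Q *ᵥ fun i => x i) with hx₀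
  have hTx : Tmap Q x₀ x = x := by
    unfold Tmap
    have h1 : x - x₀ = toE (Q *ᵥ fun i => x i) := sub_sub_cancel _ _
    rw [h1, Lmap_apply]
    have h2 : (fun i => toE (Q *ᵥ fun i => x i) i) = Q *ᵥ (fun i => x i) := rfl
    rw [h2, Matrix.mulVec_mulVec, hQorth, Matrix.one_mulVec, toE_coord]
  have hTxΩ : Tmap Q x₀ x ∈ Ω := by rw [hTx]; exact hx
  have hDv := hc Q hQorth x₀ (Tmap Q x₀) (fun y i => rfl) x hx hTxΩ
  obtain ⟨hH, hG⟩ := hess_grad_v (Q := Q) (x₀ := x₀) hΩ hu hx hTxΩ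
  rw [hTx] at hH hG
  -- gradient of v is (2d) • z
  have hgrad : gradient (fun z => u z + u (Tmap Q x₀ z)) x = (2*d) • z := by
    rw [hG]
    apply PiLp.ext
    intro i
    have h1 : (gradient u x + toE (Q *ᵥ fun i => gradient u x i)) i
        = gradient u x i + (Q *ᵥ g') i := rfl
    rw [h1, hQg]
    have h2 : ((2*d) • z' - g') i = 2*d*(z i) - gradient u x i := rfl
    have h3 : ((2*d) • z) i = 2*d*(z i) := rfl
    rw [h2, h3]
    ring
  -- quadratic form of v
  have hqf : quadForm (hess (fun z => u z + u (Tmap Q x₀ z)) x) ((2*d) • z)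
      = (2*d)^2 * (2 * quadForm (hess u x) z) := by
    rw [quadForm_smul_vec, hH, quadForm_add_matrix, quadForm_conj]
    have h4 : toE (Qᵀ *ᵥ fun i => z i) = z := by
      rw [hQsym]
      show toE (Q *ᵥ z') = z
      rw [hQz, toE_coord]
    rw [h4]
    ring
  -- laplacian of v
  have hlap : lapl (fun z => u z + u (Tmap Q x₀ z)) x = 2 * lapl u x := by
    unfold lapl
    rw [hH]
    have hsplit : ∀ i, (hess u x + Q * hess u x * Qᵀ) i i
        = hess u x i i + (Q * hess u x * Qᵀ) i i := fun i => rfl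
    rw [Finset.sum_congr rfl (fun i _ => hsplit i), Finset.sum_add_distrib,
      trace_conj hQorth]
    ring
  have hd2 : (2*d) ≠ 0 := mul_ne_zero two_ne_zero hd0
  have hr : 0 < |2*d| := abs_pos.mpr hd2
  have hnorm : ‖(2*d) • z‖ = |2*d| := by
    rw [norm_smul, hz, mul_one, Real.norm_eq_abs]
  constructor
  · intro hptop
    rw [DeltaOp_finite hptop, hgrad, hqf, hlap, hnorm] at hDv
    have h5 : (p.toReal - 2) * |2*d| ^ (p.toReal - 4) * ((2*d)^2 * (2 * quadForm (hess u x) z))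
        = 2*(p.toReal - 2) * quadForm (hess u x) z * |2*d| ^ (p.toReal - 2) := by
      rw [← rpow_sub_four_mul_sq hr p.toReal, ← sq_abs (2*d)]
      ring
    rw [h5] at hDv
    have hpow : 0 < |2*d| ^ (p.toReal - 2) := Real.rpow_pos_of_pos hr _
    by_contra hcon
    push_neg at hcon
    nlinarith [mul_pos hpow hcon]
  · intro hptop
    subst hptop
    rw [DeltaOp_top, hgrad, hqf] at hDv
    have h22 : 0 < (2*d)^2 := by
      have h23 := sq_abs (2*d)
      nlinarith
    nlinarith
end Aux7
section Aux8
open Topology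
variable {n : ℕ}
local notation "E" => EuclideanSpace ℝ (Fin n)

lemma quadForm_expand (A : Matrix (Fin n) (Fin n) ℝ) (z w : E) (t : ℝ) :
    quadForm A (z + t • w) = quadForm A z
      + t * ((fun i => z i) ⬝ᵥ (A *ᵥ fun i => w i) + (fun i => w i) ⬝ᵥ (A *ᵥ fun i => z i))
      + t^2 * quadForm A w := by
  rw [quadForm_eq_dot, quadForm_eq_dot, quadForm_eq_dot]
  have h1 : (fun i => (z + t • w) i) = (fun i => z i) + t • (fun i => w i) := rfl
  rw [h1, Matrix.mulVec_add, Matrix.mulVec_smul, add_dotProduct,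
    smul_dotProduct, dotProduct_add, dotProduct_smul,
    dotProduct_add, dotProduct_smul]
  simp only [smul_eq_mul]
  ring

lemma dot_expand (z w : E) (t : ℝ) :
    (fun i => (z + t • w) i) ⬝ᵥ (fun i => (z + t • w) i)
      = (fun i => z i) ⬝ᵥ (fun i => z i)
        + t * ((fun i => z i) ⬝ᵥ (fun i => w i) + (fun i => w i) ⬝ᵥ (fun i => z i))
        + t^2 * ((fun i => w i) ⬝ᵥ (fun i => w i)) := by
  have h1 : (fun i => (z + t • w) i) = (fun i => z i) + t • (fun i => w i) := rfl
  rw [h1, add_dotProduct, smul_dotProduct, dotProduct_add,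
    dotProduct_smul, dotProduct_add, dotProduct_smul]
  simp only [smul_eq_mul]
  ring

theorem point_ineq {p : ℝ≥0∞} {Ω : Set (EuclideanSpace ℝ (Fin n))} (hΩ : IsOpen Ω)
    {u : EuclideanSpace ℝ (Fin n) → ℝ} (hu : ContDiffOn ℝ 2 u Ω)
    (hc : HypC p Ω u) {x : EuclideanSpace ℝ (Fin n)} (hx : x ∈ Ω)
    (hg : gradient u x ≠ 0)
    {z : EuclideanSpace ℝ (Fin n)} (hz : ‖z‖ = 1) :
    (p ≠ ⊤ → lapl u x + (p.toReal - 2) * quadForm (hess u x) z ≤ 0)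
    ∧ (p = ⊤ → quadForm (hess u x) z ≤ 0) := by
  by_cases hd0 : ((fun i => z i) ⬝ᵥ fun i => gradient u x i) ≠ 0
  · exact test_ineq hΩ hu hc hx hz hd0
  · push_neg at hd0
    set A := hess u x with hA
    set gv : EuclideanSpace ℝ (Fin n) := gradient u x with hgv
    have hgn : ‖gv‖ ≠ 0 := norm_ne_zero_iff.mpr hg
    have hgpos : 0 < ‖gv‖ := norm_pos_iff.mpr hg
    set gh : EuclideanSpace ℝ (Fin n) := ‖gv‖⁻¹ • gv with hgh
    have hghcoord : (fun i => gh i) = ‖gv‖⁻¹ • (fun i => gv i) := rfl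
    have hghz : ((fun i => z i) ⬝ᵥ fun i => gh i) = 0 := by
      rw [hghcoord, dotProduct_smul, hd0]
      simp
    have hzgh : ((fun i => gh i) ⬝ᵥ fun i => z i) = 0 := by
      rw [dotProduct_comm]
      exact hghz
    have hghgh : ((fun i => gh i) ⬝ᵥ fun i => gh i) = 1 := by
      rw [dot_self_coord]
      rw [norm_smul, norm_inv, norm_norm, inv_mul_cancel₀ hgn]
      norm_num
    have hghg : ((fun i => gh i) ⬝ᵥ fun i => gv i) = ‖gv‖ := by
      rw [hghcoord, smul_dotProduct, dot_self_coord]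
      rw [smul_eq_mul]
      field_simp
    have hzz : ((fun i => z i) ⬝ᵥ fun i => z i) = 1 := by rw [dot_self_coord, hz]; norm_num
    -- quantities
    set c₁ : ℝ := (fun i => z i) ⬝ᵥ (A *ᵥ fun i => gh i)
      + (fun i => gh i) ⬝ᵥ (A *ᵥ fun i => z i) with hc₁
    set φ : ℝ → ℝ := fun t => (1 + t^2)⁻¹ * (quadForm A z + t * c₁ + t^2 * quadForm A gh)
      with hφ
    have key : ∀ t : ℝ, 0 < t →
        (p ≠ ⊤ → lapl u x + (p.toReal - 2) * φ t ≤ 0)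
        ∧ (p = ⊤ → φ t ≤ 0) := by
      intro t ht
      have hynorm : ‖z + t • gh‖ ^ 2 = 1 + t ^ 2 := by
        rw [← dot_self_coord, dot_expand, hzz, hghz, hzgh, hghgh]
        ring
      have hypos : 0 < ‖z + t • gh‖ := by
        rcases (norm_nonneg (z + t • gh)).lt_or_eq with h | h
        · exact h
        · exfalso; rw [← h] at hynorm; simp at hynorm; nlinarith
      have hunit : ‖(‖z + t • gh‖⁻¹ • (z + t • gh) : EuclideanSpace ℝ (Fin n))‖ = 1 := by
        rw [norm_smul, norm_inv, norm_norm, inv_mul_cancel₀ (ne_of_gt hypos)]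
      have hdot : ((fun i => (‖z + t • gh‖⁻¹ • (z + t • gh)) i) ⬝ᵥ fun i => gv i) ≠ 0 := by
        have hco : (fun i => (‖z + t • gh‖⁻¹ • (z + t • gh)) i)
            = ‖z + t • gh‖⁻¹ • (fun i => (z + t • gh) i) := rfl
        have hco2 : (fun i => (z + t • gh) i) = (fun i => z i) + t • (fun i => gh i) := rfl
        rw [hco, smul_dotProduct, hco2, add_dotProduct, smul_dotProduct,
          hd0, hghg]
        simp only [smul_eq_mul]
        have : t * ‖gv‖ > 0 := mul_pos ht hgpos
        have h9 : ‖z + t • gh‖⁻¹ > 0 := inv_pos.mpr hypos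
        positivity
      have hT := test_ineq hΩ hu hc hx hunit hdot
      have hqf : quadForm A (‖z + t • gh‖⁻¹ • (z + t • gh)) = φ t := by
        rw [quadForm_smul_vec, quadForm_expand]
        rw [hφ]
        have h8 : (‖z + t • gh‖⁻¹) ^ 2 = (1 + t^2)⁻¹ := by
          rw [inv_pow, hynorm]
        rw [h8]
      rw [hqf] at hT
      exact hT
    have hφcont : ContinuousAt φ 0 := by
      have h1 : ContinuousAt (fun t : ℝ => 1 + t^2) 0 := by fun_prop
      have h2 : ContinuousAt (fun t : ℝ => (1 + t^2)⁻¹) 0 := h1.inv₀ (by norm_num)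
      have h3 : ContinuousAt (fun t : ℝ => quadForm A z + t * c₁ + t^2 * quadForm A gh) 0 := by
        fun_prop
      exact h2.mul h3
    have hφ0 : φ 0 = quadForm A z := by
      rw [hφ]
      norm_num
    constructor
    · intro hptop
      have hev : ∀ᶠ t in 𝓝[>] (0:ℝ), lapl u x + (p.toReal - 2) * φ t ≤ 0 := by
        filter_upwards [self_mem_nhdsWithin] with t ht
        exact (key t ht).1 hptop
      have htend : Filter.Tendsto (fun t => lapl u x + (p.toReal - 2) * φ t) (𝓝[>] (0:ℝ))
          (𝓝 (lapl u x + (p.toReal - 2) * quadForm A z)) := by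
        have h10 := hφcont.tendsto
        rw [hφ0] at h10
        exact tendsto_const_nhds.add
          (tendsto_const_nhds.mul (h10.mono_left nhdsWithin_le_nhds))
      exact le_of_tendsto htend hev
    · intro hptop
      have hev : ∀ᶠ t in 𝓝[>] (0:ℝ), φ t ≤ 0 := by
        filter_upwards [self_mem_nhdsWithin] with t ht
        exact (key t ht).2 hptop
      have htend : Filter.Tendsto φ (𝓝[>] (0:ℝ)) (𝓝 (quadForm A z)) := by
        have h10 := hφcont.tendsto
        rw [hφ0] at h10
        exact h10.mono_left nhdsWithin_le_nhds
      exact le_of_tendsto htend hev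

theorem noncrit_Dop {p : ℝ≥0∞} (hn : 0 < n) (hp : 2 ≤ p)
    {Ω : Set (EuclideanSpace ℝ (Fin n))} (hΩ : IsOpen Ω)
    {u : EuclideanSpace ℝ (Fin n) → ℝ} (hu : ContDiffOn ℝ 2 u Ω)
    (hc : HypC p Ω u) {x : EuclideanSpace ℝ (Fin n)} (hx : x ∈ Ω)
    (hg : gradient u x ≠ 0) : Dop p u x ≤ 0 := by
  by_cases hptop : p = ⊤
  · subst hptop
    rw [Dop_top]
    apply lamMax_le hn
    intro z hz
    exact (point_ineq hΩ hu hc hx hg hz).2 rfl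
  · rw [Dop_finite hptop]
    have hq := toReal_two_le hp hptop
    rcases eq_or_lt_of_le hq with h2 | h2
    · have h0 : p.toReal - 2 = 0 := by rw [← h2]; ring
      rw [h0]
      have hz₀ : ‖(EuclideanSpace.single (⟨0, hn⟩ : Fin n) (1:ℝ))‖ = 1 := by
        rw [EuclideanSpace.norm_single]; norm_num
      have := (point_ineq hΩ hu hc hx hg hz₀).1 hptop
      rw [h0] at this
      linarith
    · have hpos : 0 < p.toReal - 2 := by linarith
      have hlmx : lamMax (hess u x) ≤ (- lapl u x) / (p.toReal - 2) := by
        apply lamMax_le hn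
        intro z hz
        have := (point_ineq hΩ hu hc hx hg hz).1 hptop
        rw [le_div_iff₀ hpos]
        nlinarith
      have h6 : (p.toReal - 2) * ((- lapl u x) / (p.toReal - 2)) = - lapl u x := by
        field_simp
      nlinarith [mul_le_mul_of_nonneg_left hlmx (le_of_lt hpos)]
end Aux8
section Aux9
open Topology Filter
variable {n : ℕ}
local notation "E" => EuclideanSpace ℝ (Fin n)

lemma hess_continuousOn {Ω : Set (EuclideanSpace ℝ (Fin n))} (hΩ : IsOpen Ω)
    {u : EuclideanSpace ℝ (Fin n) → ℝ} (hu : ContDiffOn ℝ 2 u Ω) (i j : Fin n) :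
    ContinuousOn (fun y => hess u y i j) Ω := by
  have h1 : ContDiffOn ℝ 1 (fderiv ℝ u) Ω := hu.fderiv_of_isOpen hΩ (by norm_num)
  have h2 : ContinuousOn (fderiv ℝ (fderiv ℝ u)) Ω :=
    h1.continuousOn_fderiv_of_isOpen hΩ (by norm_num)
  have h3 : Continuous (fun B : (EuclideanSpace ℝ (Fin n)) →L[ℝ]
      ((EuclideanSpace ℝ (Fin n)) →L[ℝ] ℝ) => B (ee i) (ee j)) := by
    have ha := (ContinuousLinearMap.apply ℝ ℝ (ee (n := n) j)).continuous
    have hb := (ContinuousLinearMap.apply ℝ ((EuclideanSpace ℝ (Fin n)) →L[ℝ] ℝ)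
      (ee (n := n) i)).continuous
    exact ha.comp hb
  have heq : (fun y => hess u y i j)
      = fun y => fderiv ℝ (fderiv ℝ u) y (ee i) (ee j) :=
    funext fun y => hess_eq_fderiv2 u y i j
  rw [heq]
  exact h3.comp_continuousOn h2

theorem crit_Dop {p : ℝ≥0∞} (hn : 0 < n) (hp : 2 ≤ p)
    {Ω : Set (EuclideanSpace ℝ (Fin n))} (hΩ : IsOpen Ω)
    {u : EuclideanSpace ℝ (Fin n) → ℝ} (hu : ContDiffOn ℝ 2 u Ω)
    (hc : HypC p Ω u) {x : EuclideanSpace ℝ (Fin n)} (hx : x ∈ Ω) :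
    Dop p u x ≤ 0 := by
  by_cases hg : gradient u x ≠ 0
  · exact noncrit_Dop hn hp hΩ hu hc hx hg
  push_neg at hg
  set S := {y : EuclideanSpace ℝ (Fin n) | y ∈ Ω ∧ gradient u y ≠ 0} with hSdef
  by_cases hcl : x ∈ closure S
  · -- continuity argument
    have hS : S ⊆ Ω := fun y hy => hy.1
    have hne : (𝓝[S] x).NeBot := mem_closure_iff_nhdsWithin_neBot.mp hcl
    have hent : ∀ i j, Tendsto (fun y => hess u y i j) (𝓝[S] x) (𝓝 (hess u x i j)) :=
      fun i j => ((hess_continuousOn hΩ hu i j x hx).mono hS)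
    have hEabs : Tendsto (fun y => ∑ i, ∑ j, |hess u y i j - hess u x i j|) (𝓝[S] x)
        (𝓝 0) := by
      have h0 : Tendsto (fun y => ∑ i, ∑ j, |hess u y i j - hess u x i j|) (𝓝[S] x)
          (𝓝 (∑ i : Fin n, ∑ j : Fin n, |hess u x i j - hess u x i j|)) := by
        apply tendsto_finset_sum
        intro i _
        apply tendsto_finset_sum
        intro j _
        exact ((hent i j).sub tendsto_const_nhds).abs
      simpa using h0
    have hlamT : Tendsto (fun y => lamMax (hess u y)) (𝓝[S] x) (𝓝 (lamMax (hess u x))) := by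
      have heq : ∀ y, ∑ i, ∑ j, |hess u x i j - hess u y i j|
          = ∑ i, ∑ j, |hess u y i j - hess u x i j| := by
        intro y
        apply Finset.sum_congr rfl; intro i _
        apply Finset.sum_congr rfl; intro j _
        exact abs_sub_comm _ _
      apply tendsto_of_tendsto_of_tendsto_of_le_of_le'
        (g := fun y => lamMax (hess u x) - ∑ i, ∑ j, |hess u y i j - hess u x i j|)
        (h := fun y => lamMax (hess u x) + ∑ i, ∑ j, |hess u y i j - hess u x i j|)
      · simpa using tendsto_const_nhds.sub hEabs
      · simpa using tendsto_const_nhds.add hEabs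
      · apply Filter.Eventually.of_forall
        intro y
        have := lamMax_le_of_entries_close hn (hess u x) (hess u y)
        rw [heq y] at this
        linarith
      · apply Filter.Eventually.of_forall
        intro y
        exact lamMax_le_of_entries_close hn (hess u y) (hess u x)
    have hlaplT : Tendsto (lapl u) (𝓝[S] x) (𝓝 (lapl u x)) := by
      unfold lapl
      exact tendsto_finset_sum _ (fun i _ => hent i i)
    have hev : ∀ᶠ y in 𝓝[S] x, Dop p u y ≤ 0 :=
      eventually_nhdsWithin_of_forall (fun y hy => noncrit_Dop hn hp hΩ hu hc hy.1 hy.2)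
    by_cases hptop : p = ⊤
    · subst hptop
      rw [Dop_top]
      refine le_of_tendsto hlamT (hev.mono fun y h => ?_)
      rwa [Dop_top] at h
    · rw [Dop_finite hptop]
      refine le_of_tendsto ((tendsto_const_nhds.mul hlamT).add hlaplT)
        (hev.mono fun y h => ?_)
      rwa [Dop_finite hptop] at h
  · -- gradient vanishes near x
    rw [mem_closure_iff_nhds] at hcl
    push_neg at hcl
    obtain ⟨V, hV, hVS⟩ := hcl
    have hfz : fderiv ℝ u =ᶠ[𝓝 x] (fun _ => (0 : EuclideanSpace ℝ (Fin n) →L[ℝ] ℝ)) := by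
      filter_upwards [Filter.inter_mem hV (hΩ.mem_nhds hx)] with y hy
      have hgy : gradient u y = 0 := by
        by_contra hgy
        exact (Set.not_nonempty_iff_eq_empty.mpr hVS) ⟨y, hy.1, hy.2, hgy⟩
      have hdy := (udiffat hΩ hu hy.2).hasGradientAt
      rw [hgy] at hdy
      have := hdy.hasFDerivAt
      rw [map_zero] at this
      exact this.fderiv
    have hf2 : fderiv ℝ (fderiv ℝ u) x = 0 := by
      rw [hfz.fderiv_eq]
      exact fderiv_const_apply _
    have hH0 : hess u x = 0 := by
      ext i j
      rw [hess_eq_fderiv2, hf2]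
      simp
    have hlapl0 : lapl u x = 0 := by
      unfold lapl
      rw [hH0]
      simp
    by_cases hptop : p = ⊤
    · subst hptop
      rw [Dop_top, hH0, lamMax_zero hn]
    · rw [Dop_finite hptop, hH0, hlapl0, lamMax_zero hn]
      simp
end Aux9
/-- Theorem 1 (ii), (c) ⇔ (d). -/
theorem stmt_11 {n : ℕ} (hn : 2 ≤ n) (p : ℝ≥0∞) (hp : 2 ≤ p)
    (Ω : Set (EuclideanSpace ℝ (Fin n))) (hΩ : IsOpen Ω)
    (u : EuclideanSpace ℝ (Fin n) → ℝ) (hu : ContDiffOn ℝ 2 u Ω) :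
    (∀ (Q : Matrix (Fin n) (Fin n) ℝ), Qᵀ * Q = 1 →
      ∀ x₀ : EuclideanSpace ℝ (Fin n),
      ∀ T : EuclideanSpace ℝ (Fin n) → EuclideanSpace ℝ (Fin n),
        (∀ x, ∀ i, T x i = Qᵀ.mulVec (fun j => x j - x₀ j) i) →
        ∀ x, x ∈ Ω → T x ∈ Ω → DeltaOp p (fun z => u z + u (T z)) x ≤ 0) ↔
    (∀ x ∈ Ω, Dop p u x ≤ 0) := by
  have hn0 : 0 < n := lt_of_lt_of_le two_pos hn
  constructor
  · intro hc x hx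
    exact crit_Dop hn0 hp hΩ hu hc hx
  · intro hd Q hQ x₀ T hT x hx hTxΩ
    have hTeq : T = Tmap Q x₀ := funext fun y => PiLp.ext fun i => hT y i
    rw [hTeq] at hTxΩ ⊢
    exact dir_dc hn0 hp hΩ hu hd Q hQ x₀ x hx hTxΩ
end

section
/- (Domination, viscosity sense.) Let n ≥ 2, 2 ≤ p ≤ ∞ and Ω ⊆ ℝⁿ open. If u : Ω → (−∞,∞] satisfies D_p u ≤ 0 in the viscosity sense in Ω, then u is p-superharmonic in Ω, i.e. u is a viscosity supersolution of Δ_p u = 0. -/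
open scoped ENNReal
open Filter Matrix

section Aux

variable {n : ℕ}

lemma quadForm_smul (A : Matrix (Fin n) (Fin n) ℝ) (c : ℝ) (z : EuclideanSpace ℝ (Fin n)) :
    quadForm A (c • z) = c ^ 2 * quadForm A z := by
  unfold quadForm
  rw [Finset.mul_sum]
  refine Finset.sum_congr rfl fun i _ => ?_
  rw [Finset.mul_sum]
  refine Finset.sum_congr rfl fun j _ => ?_
  simp only [PiLp.smul_apply, smul_eq_mul]
  ring

lemma quadForm_zero (A : Matrix (Fin n) (Fin n) ℝ) :
    quadForm A (0 : EuclideanSpace ℝ (Fin n)) = 0 := by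
  unfold quadForm
  simp

lemma bddAbove_quadForm (A : Matrix (Fin n) (Fin n) ℝ) :
    BddAbove {r : ℝ | ∃ z : EuclideanSpace ℝ (Fin n), ‖z‖ = 1 ∧ r = quadForm A z} := by
  refine ⟨∑ i, ∑ j, |A i j|, fun r hr => ?_⟩
  obtain ⟨z, hz, rfl⟩ := hr
  have hsum : ∑ i, z i ^ 2 = 1 := by
    have := EuclideanSpace.norm_eq z
    rw [hz] at this
    have h0 : (0:ℝ) ≤ ∑ i, ‖z i‖ ^ 2 := Finset.sum_nonneg fun i _ => by positivity
    have := Real.sqrt_eq_one.mp this.symm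
    simpa [Real.norm_eq_abs, sq_abs] using this
  have hle : ∀ i, |z i| ≤ 1 := by
    intro i
    have h1 : z i ^ 2 ≤ 1 := by
      rw [← hsum]
      exact Finset.single_le_sum (f := fun j => z j ^ 2) (fun j _ => by positivity)
        (Finset.mem_univ i)
    exact (sq_le_one_iff_abs_le_one (a := z i)).mp h1
  unfold quadForm
  refine Finset.sum_le_sum fun i _ => Finset.sum_le_sum fun j _ => ?_
  calc z i * A i j * z j ≤ |z i * A i j * z j| := le_abs_self _
    _ = |z i| * |A i j| * |z j| := by rw [abs_mul, abs_mul]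
    _ ≤ 1 * |A i j| * 1 := by
        gcongr
        · exact hle i
        · exact hle j
    _ = |A i j| := by ring

lemma quadForm_le_lamMax (A : Matrix (Fin n) (Fin n) ℝ) (z : EuclideanSpace ℝ (Fin n))
    (hz : ‖z‖ = 1) : quadForm A z ≤ lamMax A :=
  le_csSup (bddAbove_quadForm A) ⟨z, hz, rfl⟩

end Aux

/-- Domination, viscosity sense. -/
theorem stmt_13 {n : ℕ} (hn : 2 ≤ n) (p : ℝ≥0∞) (hp : 2 ≤ p)
    (Ω : Set (EuclideanSpace ℝ (Fin n))) (hΩ : IsOpen Ω)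
    (u : EuclideanSpace ℝ (Fin n) → EReal)
    (h : ViscSupersol (Dop p) Ω u) :
    ViscSupersol (DeltaOp p) Ω u := by

  obtain ⟨h1, h2, h3, h4⟩ := h
  refine ⟨h1, h2, h3, fun x₀ hx₀ φ hφ hφx hφle => ?_⟩
  have hD := h4 x₀ hx₀ φ hφ hφx hφle
  set g := gradient φ x₀ with hg
  set H := hess φ x₀ with hH
  by_cases hptop : p = ⊤
  · simp only [Dop, hptop, if_true] at hD
    simp only [DeltaOp, hptop, if_true]
    by_cases hg0 : g = 0
    · rw [← hg, hg0, quadForm_zero]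
    · have hc : (0:ℝ) < ‖g‖ := norm_pos_iff.mpr hg0
      have hunit : ‖(‖g‖⁻¹ • g)‖ = 1 := by
        rw [norm_smul, norm_inv, norm_norm, inv_mul_cancel₀ hc.ne']
      have hle := quadForm_le_lamMax H _ hunit
      rw [quadForm_smul] at hle
      have : quadForm H g = ‖g‖ ^ 2 * (‖g‖⁻¹ ^ 2 * quadForm H g) := by
        field_simp
      rw [← hg, ← hH, this]
      exact mul_nonpos_of_nonneg_of_nonpos (by positivity) (hle.trans hD)
  · have ht : (2:ℝ) ≤ p.toReal := by
      have : (2:ℝ≥0∞).toReal ≤ p.toReal :=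
        (ENNReal.toReal_le_toReal (by simp) hptop).mpr hp
      simpa using this
    simp only [Dop, hptop, if_false] at hD
    simp only [DeltaOp, hptop, if_false, ← hg, ← hH]
    set t := p.toReal with htt
    by_cases hg0 : g = 0
    · rw [hg0, quadForm_zero]
      simp only [norm_zero, mul_zero, add_zero]
      rcases eq_or_lt_of_le ht with h2 | h2
      · rw [← h2]
        norm_num
        linarith [hD, (by rw [← h2]; ring_nf : (t - 2) * lamMax H = 0)]
      · rw [Real.zero_rpow (by linarith : t - 2 ≠ 0)]
        simp
    · have hc : (0:ℝ) < ‖g‖ := norm_pos_iff.mpr hg0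
      have hunit : ‖(‖g‖⁻¹ • g)‖ = 1 := by
        rw [norm_smul, norm_inv, norm_norm, inv_mul_cancel₀ hc.ne']
      have hle := quadForm_le_lamMax H _ hunit
      rw [quadForm_smul] at hle
      have hq : quadForm H g = ‖g‖ ^ 2 * (‖g‖⁻¹ ^ 2 * quadForm H g) := by
        field_simp
      set q := ‖g‖⁻¹ ^ 2 * quadForm H g with hqdef
      have hpow : ‖g‖ ^ (t - 4) * ‖g‖ ^ (2:ℕ) = ‖g‖ ^ (t - 2) := by
        rw [← Real.rpow_natCast ‖g‖ 2, ← Real.rpow_add hc]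
        congr 1
        ring
      calc ‖g‖ ^ (t - 2) * lapl φ x₀ + (t - 2) * ‖g‖ ^ (t - 4) * quadForm H g
          = ‖g‖ ^ (t - 2) * (lapl φ x₀ + (t - 2) * q) := by
            rw [hq]
            have hstep : (t - 2) * ‖g‖ ^ (t - 4) * (‖g‖ ^ 2 * q)
                = (t - 2) * ‖g‖ ^ (t - 2) * q := by rw [← hpow]; ring
            rw [hstep]
            ring
        _ ≤ ‖g‖ ^ (t - 2) * 0 := by
            apply mul_le_mul_of_nonneg_left _ (Real.rpow_nonneg hc.le _)
            have : (t - 2) * q ≤ (t - 2) * lamMax H :=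
              mul_le_mul_of_nonneg_left hle (by linarith)
            linarith
        _ = 0 := mul_zero _
end
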